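/- For every a ∈ ℝ and every k ∈ ℕ, the series Σ_{l=0}^{∞} (a^l / l!) · Γ((l+k+1)/2) converges, and its sum equals the (finite) integral ∫_{−∞}^{∞} e^{a|x|} |x|^k e^{−x²} dx. In particular (the case a = 0), ∫_{−∞}^{∞} |x|^k e^{−x²} dx = Γ((k+1)/2). -/

import Mathlib

open MeasureTheory

open Set

private lemma hasSum_exp_real' (t : ℝ) :
    HasSum (fun l : ℕ => t ^ l / (Nat.factorial l : ℝ)) (Real.exp t) := by
  rw [Real.exp_eq_exp_ℝ]
  exact NormedSpace.expSeries_div_hasSum_exp t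

private lemma gamma_int' (m : ℕ) :
    ∫ x : ℝ, |x| ^ m * Real.exp (-x ^ 2) = Real.Gamma (((m : ℝ) + 1) / 2) := by
  have h1 : (∫ x : ℝ, |x| ^ m * Real.exp (-x ^ 2))
      = ∫ x : ℝ, (fun y : ℝ => y ^ m * Real.exp (-y ^ 2)) |x| := by
    congr 1; ext x; simp [sq_abs]
  rw [h1, integral_comp_abs (f := fun y : ℝ => y ^ m * Real.exp (-y ^ 2))]
  have h2 : (∫ y in Ioi (0 : ℝ), y ^ m * Real.exp (-y ^ 2))
      = ∫ y in Ioi (0 : ℝ), y ^ (m : ℝ) * Real.exp (-y ^ (2 : ℝ)) := by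
    refine setIntegral_congr_fun measurableSet_Ioi fun y _ => ?_
    rw [Real.rpow_natCast, Real.rpow_two]
  rw [h2, integral_rpow_mul_exp_neg_rpow (by norm_num)
    (lt_of_lt_of_le neg_one_lt_zero (Nat.cast_nonneg m))]
  ring

private lemma intble_aux' (b : ℝ) (k : ℕ) :
    Integrable (fun x : ℝ => Real.exp (b * |x|) * |x| ^ k * Real.exp (-x ^ 2)) := by
  have hdom : Integrable (fun x : ℝ =>
      Real.exp (b ^ 2 / 2) * ((1 + x ^ (2 * k)) * Real.exp (-(1/2 : ℝ) * x ^ 2))) := by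
    refine Integrable.const_mul ?_ _
    have ha : Integrable (fun x : ℝ => Real.exp (-(1/2 : ℝ) * x ^ 2)) :=
      integrable_exp_neg_mul_sq (by norm_num)
    have hb' : Integrable (fun x : ℝ => x ^ (2 * k) * Real.exp (-(1/2 : ℝ) * x ^ 2)) := by
      refine (integrable_rpow_mul_exp_neg_mul_sq (b := 1/2) (by norm_num)
        (s := ((2 * k : ℕ) : ℝ)) (lt_of_lt_of_le neg_one_lt_zero (Nat.cast_nonneg _))).congr ?_
      filter_upwards with x
      rw [Real.rpow_natCast]
    simpa [add_mul, one_mul, Pi.add_def] using ha.add hb'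
  refine hdom.mono' ?_ ?_
  · exact (((Real.continuous_exp.comp (continuous_const.mul continuous_abs)).mul
      (continuous_abs.pow k)).mul
      (Real.continuous_exp.comp (continuous_pow 2).neg)).aestronglyMeasurable
  · filter_upwards with x
    rw [Real.norm_eq_abs, abs_of_nonneg (by positivity)]
    have e1 : |x| ^ k ≤ 1 + x ^ (2 * k) := by
      have hx : x ^ (2 * k) = (|x| ^ k) ^ 2 := by
        calc x ^ (2 * k) = (x ^ 2) ^ k := pow_mul x 2 k
          _ = (|x| ^ 2) ^ k := by rw [sq_abs]
          _ = (|x| ^ k) ^ 2 := by rw [← pow_mul, ← pow_mul, Nat.mul_comm]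
      rw [hx]
      nlinarith [sq_nonneg (|x| ^ k - 1), pow_nonneg (abs_nonneg x) k]
    have e2 : Real.exp (b * |x|) * Real.exp (-x ^ 2)
        ≤ Real.exp (b ^ 2 / 2) * Real.exp (-(1/2 : ℝ) * x ^ 2) := by
      rw [← Real.exp_add, ← Real.exp_add]
      apply Real.exp_le_exp.mpr
      nlinarith [sq_nonneg (|x| - b), sq_abs x]
    calc Real.exp (b * |x|) * |x| ^ k * Real.exp (-x ^ 2)
        = (Real.exp (b * |x|) * Real.exp (-x ^ 2)) * |x| ^ k := by ring
      _ ≤ (Real.exp (b ^ 2 / 2) * Real.exp (-(1/2 : ℝ) * x ^ 2)) * (1 + x ^ (2 * k)) := by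
          apply mul_le_mul e2 e1 (by positivity) (by positivity)
      _ = Real.exp (b ^ 2 / 2) * ((1 + x ^ (2 * k)) * Real.exp (-(1/2 : ℝ) * x ^ 2)) := by ring

private lemma F_int' (c : ℝ) (m : ℕ) :
    Integrable (fun x : ℝ => c * (|x| ^ m * Real.exp (-x ^ 2))) := by
  apply Integrable.const_mul
  have h : Integrable (fun x : ℝ => x ^ (m : ℝ) * Real.exp (-1 * x ^ 2)) :=
    integrable_rpow_mul_exp_neg_mul_sq one_pos (lt_of_lt_of_le neg_one_lt_zero (Nat.cast_nonneg m))
  refine h.abs.congr ?_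
  filter_upwards with x
  rw [abs_mul, Real.rpow_natCast, abs_pow, abs_of_pos (Real.exp_pos _), neg_one_mul]


/-- For every `a ∈ ℝ` and `k ∈ ℕ`, the series
`∑_l (a^l/l!)·Γ((l+k+1)/2)` converges with sum the finite integral
`∫ e^{a|x|}|x|^k e^{-x²} dx`; in particular (`a = 0`),
`∫ |x|^k e^{-x²} dx = Γ((k+1)/2)`. -/
theorem series_eq_integral_gamma (a : ℝ) (k : ℕ) :
    (Integrable fun x : ℝ => Real.exp (a * |x|) * |x| ^ k * Real.exp (-x ^ 2)) ∧
    HasSum (fun l : ℕ => a ^ l / (Nat.factorial l : ℝ) *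
        Real.Gamma (((l : ℝ) + (k : ℝ) + 1) / 2))
      (∫ x : ℝ, Real.exp (a * |x|) * |x| ^ k * Real.exp (-x ^ 2)) ∧
    (∫ x : ℝ, |x| ^ k * Real.exp (-x ^ 2)) = Real.Gamma (((k : ℝ) + 1) / 2) := by
  refine ⟨intble_aux' a k, ?_, gamma_int' k⟩
  set F : ℕ → ℝ → ℝ := fun l x =>
    (a ^ l / (Nat.factorial l : ℝ)) * (|x| ^ (l + k) * Real.exp (-x ^ 2)) with hF
  have hF_int : ∀ l, Integrable (F l) := fun l => F_int' _ _
  -- pointwise expansion, for any base `b`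
  have hptw : ∀ (b : ℝ) (x : ℝ), HasSum (fun l : ℕ =>
      (b ^ l / (Nat.factorial l : ℝ)) * (|x| ^ (l + k) * Real.exp (-x ^ 2)))
      (Real.exp (b * |x|) * |x| ^ k * Real.exp (-x ^ 2)) := by
    intro b x
    have h := (hasSum_exp_real' (b * |x|)).mul_right (|x| ^ k * Real.exp (-x ^ 2))
    rw [← mul_assoc] at h
    refine h.congr_fun fun l => ?_
    rw [mul_pow, pow_add]
    ring
  -- norms of F l
  have hnormF : ∀ l x, ‖F l x‖ =
      (|a| ^ l / (Nat.factorial l : ℝ)) * (|x| ^ (l + k) * Real.exp (-x ^ 2)) := by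
    intro l x
    rw [hF, Real.norm_eq_abs, abs_mul, abs_mul, abs_div, abs_pow, abs_pow, abs_abs,
      abs_of_pos (Real.exp_pos _), Nat.abs_cast]
  have hsum : Summable fun l => ∫ x, ‖F l x‖ := by
    apply summable_of_sum_range_le
      (c := ∫ x : ℝ, Real.exp (|a| * |x|) * |x| ^ k * Real.exp (-x ^ 2))
    · exact fun n => integral_nonneg fun x => norm_nonneg _
    · intro n
      rw [← integral_finset_sum _ fun l _ => (hF_int l).norm]
      refine integral_mono (integrable_finset_sum _ fun l _ => (hF_int l).norm)
        (intble_aux' |a| k) fun x => ?_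
      have hs : HasSum (fun l => ‖F l x‖)
          (Real.exp (|a| * |x|) * |x| ^ k * Real.exp (-x ^ 2)) := by
        refine (hptw |a| x).congr_fun fun l => ?_
        rw [hnormF]
      exact sum_le_hasSum (Finset.range n) (fun l _ => norm_nonneg _) hs
  have key := hasSum_integral_of_summable_integral_norm hF_int hsum
  have h1 : (fun l => ∫ x, F l x) = fun l : ℕ => a ^ l / (Nat.factorial l : ℝ) *
      Real.Gamma (((l : ℝ) + (k : ℝ) + 1) / 2) := by
    funext l
    rw [hF]
    rw [MeasureTheory.integral_const_mul, gamma_int' (l + k)]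
    push_cast
    ring_nf
  have h2 : (∫ x : ℝ, ∑' l, F l x)
      = ∫ x : ℝ, Real.exp (a * |x|) * |x| ^ k * Real.exp (-x ^ 2) := by
    congr 1
    funext x
    exact (hptw a x).tsum_eq
  rw [h1, h2] at key
  exact key
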